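/- Let ε ≥ 0 and let the hypotheses of Theorem 5.2 hold: F = X^{bs} + E with ‖E‖ = ε, X^{bs} = Σ_{s=1}^r u^{s,1}⊗...⊗u^{s,m} normalized so (u^{s,j})_0 = 1 for j ≥ 2; the families {(u^{s,1})_{0:r−1}} and {u^{s,2}⊗...⊗u^{s,m}} are each linearly independent; each coefficient matrix A[X^{bs},j] has full column rank; the tuple is scaling-optimal; and the scalars Σ_{(0,j,k)} ξ_{j,k}(u^{s,j})_k are pairwise distinct over s. If ε = 0 (i.e., rank F = r), then the tensor X^{gp} produced by Algorithm 5.1 equals F, giving a rank decomposition of F. -/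

import Mathlib

open Matrix Finset

noncomputable section

/-- Index set of a tensor in `ℂ^{(n₀+1) × ⋯ × (n_{m−1}+1)}`. -/
abbrev TIdx (m : ℕ) (n : Fin m → ℕ) := (j : Fin m) → Fin (n j + 1)

/-- The (Hilbert–Schmidt) norm of a tensor. -/
noncomputable def tnorm {m : ℕ} {n : Fin m → ℕ} (X : TIdx m n → ℂ) : ℝ :=
  Real.sqrt (∑ idx : TIdx m n, ‖X idx‖ ^ 2)

/-- The least squares objective of (5.9): `Σ_{τ=(i,j,k)} ‖A[F,j] G(:,τ) − b[F,τ]‖²`. -/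
noncomputable def gobj {m r : ℕ} [NeZero m] {n : Fin m → ℕ} (hr : r ≤ n 0 + 1)
    (F : TIdx m n → ℂ)
    (G : Fin r → Fin r → (j : Fin m) → Fin (n j + 1) → ℂ) : ℝ :=
  ∑ i : Fin r, ∑ j ∈ univ.filter (fun j : Fin m => j ≠ 0),
    ∑ k ∈ univ.filter (fun k : Fin (n j + 1) => k ≠ 0),
      ∑ μ ∈ univ.filter (fun μ : TIdx m n => μ 0 = 0 ∧ μ j = 0),
        ‖(∑ ℓ : Fin r,
            G ℓ i j k * F (Function.update μ 0 (Fin.castLE hr ℓ))) -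
          F (Function.update (Function.update μ 0 (Fin.castLE hr i)) j k)‖ ^ 2

/-- The matrix `M̂^{j,k}` built from `G`: its `(i,ℓ)` entry is `G(ℓ,(i,j,k))`. -/
def Mhat {m r : ℕ} {n : Fin m → ℕ}
    (G : Fin r → Fin r → (j : Fin m) → Fin (n j + 1) → ℂ)
    (j : Fin m) (k : Fin (n j + 1)) : Matrix (Fin r) (Fin r) ℂ :=
  Matrix.of fun i ℓ => G ℓ i j k

/-- The vectors `v̂^{s,j} = (1, q_s^* M̂^{j,1} q_s, …, q_s^* M̂^{j,n_j−1} q_s)`. -/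
noncomputable def vhat {m r : ℕ} {n : Fin m → ℕ}
    (G : Fin r → Fin r → (j : Fin m) → Fin (n j + 1) → ℂ)
    (Q : Matrix (Fin r) (Fin r) ℂ)
    (s : Fin r) (j : Fin m) (k : Fin (n j + 1)) : ℂ :=
  if k = 0 then 1 else (Qᴴ * Mhat G j k * Q) s s

private lemma tnorm_le_zero {m : ℕ} {n : Fin m → ℕ} {X : TIdx m n → ℂ}
    (h : tnorm X ≤ 0) (idx : TIdx m n) : X idx = 0 := by
  have hs : ∑ i : TIdx m n, ‖X i‖ ^ 2 ≤ 0 :=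
    Real.sqrt_eq_zero'.mp (le_antisymm h (Real.sqrt_nonneg _))
  have h0 : ∀ b ∈ Finset.univ, (0:ℝ) ≤ ‖X b‖ ^ 2 := fun b _ => sq_nonneg _
  have := (Finset.sum_eq_zero_iff_of_nonneg h0).mp
    (le_antisymm hs (Finset.sum_nonneg h0)) idx (Finset.mem_univ idx)
  have habs : ‖X idx‖ = 0 := by
    have := pow_eq_zero_iff (n := 2) (by norm_num) |>.mp this
    exact this
  exact norm_eq_zero.mp habs

private lemma tnorm_of_zero {m : ℕ} {n : Fin m → ℕ} {X : TIdx m n → ℂ}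
    (h : ∀ idx, X idx = 0) : tnorm X = 0 := by
  have : ∀ idx : TIdx m n, ‖X idx‖ ^ 2 = 0 := by
    intro idx; rw [h idx]; simp
  simp [tnorm, Finset.sum_congr rfl fun idx _ => this idx]

private lemma diag_of_triangular_mul {r : ℕ} {X Y : Matrix (Fin r) (Fin r) ℂ}
    (hX : X.BlockTriangular id) (hY : Y.BlockTriangular id) (t : Fin r) :
    (X * Y) t t = X t t * Y t t := by
  rw [Matrix.mul_apply]
  refine Finset.sum_eq_single t (fun ℓ _ hℓ => ?_) (by simp)
  rcases lt_or_gt_of_ne hℓ with h | h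
  · rw [hX (show (id ℓ : Fin r) < id t from h), zero_mul]
  · rw [hY (show (id t : Fin r) < id ℓ from h), mul_zero]

private lemma schur_diag {r : ℕ} (S T : Matrix (Fin r) (Fin r) ℂ)
    (hS : IsUnit S) (hT : T.BlockTriangular id)
    (Λ : Fin r → ℂ) (hΛ : Function.Injective Λ)
    (hTS : T * S = S * Matrix.diagonal Λ) :
    ∃ σ : Equiv.Perm (Fin r), ∀ (D : Fin r → ℂ) (B : Matrix (Fin r) (Fin r) ℂ),
      B * S = S * Matrix.diagonal D → ∀ t, B t t = D (σ t) := by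
  classical
  -- columns of S are nonzero
  have hcol : ∀ s : Fin r, (Finset.univ.filter (fun ℓ => S ℓ s ≠ 0)).Nonempty := by
    intro s
    by_contra hc
    rw [Finset.not_nonempty_iff_eq_empty, Finset.filter_eq_empty_iff] at hc
    have hinj : Function.Injective S.mulVec := Matrix.mulVec_injective_iff_isUnit.mpr hS
    have h1 : S.mulVec (Pi.single s 1) = S.mulVec 0 := by
      rw [Matrix.mulVec_zero]
      funext i
      simp only [Matrix.mulVec, dotProduct]
      refine Finset.sum_eq_zero fun c _ => ?_
      by_cases hcs : c = s
      · subst hcs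
        rw [not_not.mp (hc (Finset.mem_univ i)), zero_mul]
      · rw [Pi.single_eq_of_ne hcs, mul_zero]
    have := hinj h1
    have : (Pi.single s 1 : Fin r → ℂ) s = 0 := by rw [this]; rfl
    simp at this
  let tmax : Fin r → Fin r := fun s => (Finset.univ.filter (fun ℓ => S ℓ s ≠ 0)).max' (hcol s)
  have htop : ∀ s, S (tmax s) s ≠ 0 := fun s =>
    (Finset.mem_filter.mp ((Finset.univ.filter (fun ℓ => S ℓ s ≠ 0)).max'_mem (hcol s))).2
  have hzero : ∀ s ℓ, tmax s < ℓ → S ℓ s = 0 := by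
    intro s ℓ hl
    by_contra hne
    exact absurd (Finset.le_max' _ ℓ (Finset.mem_filter.mpr ⟨Finset.mem_univ _, hne⟩))
      (not_le.mpr hl)
  -- T (tmax s) (tmax s) = Λ s
  have heigen : ∀ s i, ∑ ℓ, T i ℓ * S ℓ s = Λ s * S i s := by
    intro s i
    have := congrFun (congrFun hTS i) s
    rw [Matrix.mul_apply, Matrix.mul_diagonal] at this
    rw [this]; ring
  have hdiagT : ∀ s, T (tmax s) (tmax s) = Λ s := by
    intro s
    have h1 := heigen s (tmax s)
    have h2 : ∑ ℓ, T (tmax s) ℓ * S ℓ s = T (tmax s) (tmax s) * S (tmax s) s := by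
      refine Finset.sum_eq_single (tmax s) (fun ℓ _ hℓ => ?_) (by simp)
      rcases lt_or_gt_of_ne hℓ with h | h
      · rw [hT (show (id ℓ : Fin r) < id (tmax s) from h), zero_mul]
      · rw [hzero s ℓ h, mul_zero]
    rw [h2] at h1
    exact mul_right_cancel₀ (htop s) h1
  have htinj : Function.Injective tmax := by
    intro a b hab
    apply hΛ
    rw [← hdiagT a, ← hdiagT b, hab]
  let e : Fin r ≃ Fin r := Equiv.ofBijective tmax (Finite.injective_iff_bijective.mp htinj)
  refine ⟨e.symm, ?_⟩
  have htmaxe : ∀ q, tmax (e.symm q) = q := fun q => e.apply_symm_apply q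
  -- permutation matrix
  set P : Matrix (Fin r) (Fin r) ℂ := (1 : Matrix (Fin r) (Fin r) ℂ).submatrix id e.symm with hP
  have hPunit : IsUnit P := by
    apply IsUnit.of_mul_eq_one ((1 : Matrix (Fin r) (Fin r) ℂ).submatrix e.symm id)
    have h2 := Matrix.submatrix_mul_equiv (1 : Matrix (Fin r) (Fin r) ℂ)
      (1 : Matrix (Fin r) (Fin r) ℂ) id e.symm id
    rw [hP, h2, one_mul, Matrix.submatrix_id_id]
  set S' : Matrix (Fin r) (Fin r) ℂ := S * P with hS'
  have hS'apply : ∀ a b, S' a b = S a (e.symm b) := by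
    intro a b
    rw [hS', hP, Matrix.mul_apply]
    rw [Finset.sum_eq_single (e.symm b) (fun c _ hc => by
        rw [Matrix.submatrix_apply, id_eq, Matrix.one_apply_ne hc, mul_zero])
      (fun h => absurd (Finset.mem_univ _) h)]
    rw [Matrix.submatrix_apply, id_eq, Matrix.one_apply_eq, mul_one]
  have hS'unit : IsUnit S' := hS.mul hPunit
  have hS'tri : S'.BlockTriangular id := by
    intro ℓ q h
    rw [hS'apply]
    exact hzero (e.symm q) ℓ (by rw [htmaxe q]; exact h)
  have hS'dne : ∀ t, S' t t ≠ 0 := by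
    intro t
    rw [hS'apply]
    have := htop (e.symm t)
    rwa [htmaxe t] at this
  haveI := hS'unit.invertible
  have hS'invtri : S'⁻¹.BlockTriangular id :=
    Matrix.blockTriangular_inv_of_blockTriangular hS'tri
  have hS'inv : S' * S'⁻¹ = 1 := Matrix.mul_nonsing_inv _ ((Matrix.isUnit_iff_isUnit_det S').mp hS'unit)
  have hdinv : ∀ t, S' t t * S'⁻¹ t t = 1 := by
    intro t
    have := congrFun (congrFun hS'inv t) t
    rw [diag_of_triangular_mul hS'tri hS'invtri] at this
    rw [this]; simp
  intro D B hB t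
  -- B * S' = S' * diagonal (D ∘ e.symm)
  have hDP : Matrix.diagonal D * P = P * Matrix.diagonal (fun q => D (e.symm q)) := by
    ext a b
    simp only [Matrix.diagonal_mul, Matrix.mul_diagonal, hP, Matrix.submatrix_apply, id_eq]
    by_cases hab : a = e.symm b
    · subst hab; ring
    · rw [Matrix.one_apply_ne (show id a ≠ e.symm b from hab), zero_mul, mul_zero]
  have hBS' : B * S' = S' * Matrix.diagonal (fun q => D (e.symm q)) := by
    rw [hS', ← Matrix.mul_assoc, hB, Matrix.mul_assoc, hDP, ← Matrix.mul_assoc]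
  have hBeq : B = S' * Matrix.diagonal (fun q => D (e.symm q)) * S'⁻¹ := by
    rw [← hBS', Matrix.mul_assoc, Matrix.mul_nonsing_inv _
      ((Matrix.isUnit_iff_isUnit_det S').mp hS'unit), Matrix.mul_one]
  rw [hBeq]
  have h1 : (S' * Matrix.diagonal (fun q => D (e.symm q))).BlockTriangular id :=
    hS'tri.mul (Matrix.blockTriangular_diagonal _)
  rw [diag_of_triangular_mul h1 hS'invtri, Matrix.mul_diagonal]
  calc S' t t * D (e.symm t) * S'⁻¹ t t = D (e.symm t) * (S' t t * S'⁻¹ t t) := by ring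
  _ = D (e.symm t) := by rw [hdinv t, mul_one]

/-- Corollary 5.3: under the assumptions of Theorem 5.2, if `ε = 0`
(i.e. `F = X^{bs}` has rank `r`), then the tensor `X^{gp}` produced by
Algorithm 5.1 equals `F`, giving a rank decomposition of `F`. -/
theorem stmt16 {m r : ℕ} [NeZero m] {n : Fin m → ℕ} (hr : r ≤ n 0 + 1)
    (u : Fin r → (j : Fin m) → Fin (n j + 1) → ℂ)
    (hnorm : ∀ s, ∀ j : Fin m, j ≠ 0 → u s j 0 = 1)
    (ξ : (j : Fin m) → Fin (n j + 1) → ℝ)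
    (hξpos : ∀ (j : Fin m) (k : Fin (n j + 1)), j ≠ 0 → k ≠ 0 → 0 < ξ j k)
    (hξ1 : ∀ k, ξ 0 k = 0) (hξ2 : ∀ j, ξ j 0 = 0)
    (F : TIdx m n → ℂ)
    -- `ε = 0`: `F` equals the rank-`r` tensor `X^{bs}`
    (hF : ∀ idx, F idx = ∑ s : Fin r, ∏ j : Fin m, u s j (idx j))
    -- (i) linear independence of the truncations and of the partial outer products
    (hli1 : LinearIndependent ℂ fun s : Fin r =>
      fun ℓ : Fin r => u s 0 (Fin.castLE hr ℓ))
    (hli2 : LinearIndependent ℂ fun s : Fin r => fun idx : TIdx m n =>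
      ∏ j ∈ univ.filter (fun j : Fin m => j ≠ 0), u s j (idx j))
    -- (ii) each `A[X^{bs}, j]` has full column rank
    (hrank : ∀ j : Fin m, j ≠ 0 →
      (Matrix.of fun (μ : {μ : TIdx m n // μ 0 = 0 ∧ μ j = 0}) (ℓ : Fin r) =>
        ∑ s : Fin r, ∏ j' : Fin m,
          u s j' (Function.update (μ : TIdx m n) 0 (Fin.castLE hr ℓ) j')).rank = r)
    -- (iii) the tuple is scaling-optimal for `F`
    (hscal : ∀ y : Fin r → Fin (n 0 + 1) → ℂ,
      tnorm (fun idx => F idx - ∑ s : Fin r, ∏ j : Fin m, u s j (idx j)) ≤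
      tnorm (fun idx => F idx - ∑ s : Fin r, y s (idx 0) *
        ∏ j ∈ univ.filter (fun j : Fin m => j ≠ 0), u s j (idx j)))
    -- (iv) the weighted sums are pairwise distinct over `s`
    (hdist : Function.Injective fun s : Fin r =>
      ∑ j : Fin m, ∑ k : Fin (n j + 1), (ξ j k : ℂ) * u s j k) :
    -- Step 1: `G` minimizes the least squares (5.9)
    ∀ G : Fin r → Fin r → (j : Fin m) → Fin (n j + 1) → ℂ,
      (∀ G', gobj hr F G ≤ gobj hr F G') →
    -- Step 2: Schur decomposition of `M̂(ξ)`
    ∀ Q T : Matrix (Fin r) (Fin r) ℂ,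
      Q ∈ Matrix.unitaryGroup (Fin r) ℂ → T.BlockTriangular id →
      Qᴴ * (∑ j : Fin m, ∑ k : Fin (n j + 1), (ξ j k : ℂ) • Mhat G j k) * Q = T →
    -- Step 3: first-mode vectors by linear least squares
    ∀ v1 : Fin r → Fin (n 0 + 1) → ℂ,
      (∀ z : Fin r → Fin (n 0 + 1) → ℂ,
        tnorm (fun idx => (∑ s : Fin r, v1 s (idx 0) *
            ∏ j ∈ univ.filter (fun j : Fin m => j ≠ 0), vhat G Q s j (idx j)) - F idx) ≤
        tnorm (fun idx => (∑ s : Fin r, z s (idx 0) *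
            ∏ j ∈ univ.filter (fun j : Fin m => j ≠ 0), vhat G Q s j (idx j)) - F idx)) →
    -- Conclusion: `X^{gp} = F`, a rank decomposition of `F`
    (fun idx : TIdx m n => ∑ s : Fin r, v1 s (idx 0) *
        ∏ j ∈ univ.filter (fun j : Fin m => j ≠ 0), vhat G Q s j (idx j)) = F := by
  classical
  intro G hG Q T hQ hTtri hQT v1 hv1
  set W : Matrix (Fin r) (Fin r) ℂ :=
    Matrix.of (fun s ℓ => u s 0 (Fin.castLE hr ℓ)) with hWdef
  have hW : IsUnit W := Matrix.linearIndependent_rows_iff_isUnit.mp hli1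
  have hWW : W * W⁻¹ = 1 := Matrix.mul_nonsing_inv _ ((Matrix.isUnit_iff_isUnit_det W).mp hW)
  set p : Fin r → TIdx m n → ℂ :=
    fun s μ => ∏ j ∈ univ.filter (fun j : Fin m => j ≠ 0), u s j (μ j) with hpdef
  have hfe : (univ.filter (fun j : Fin m => j ≠ 0)) = univ.erase 0 := Finset.filter_ne' univ 0
  have hp : ∀ (s : Fin r) (μ : TIdx m n), p s μ = ∏ j' ∈ univ.erase 0, u s j' (μ j') := by
    intro s μ
    simp only [hpdef]
    rw [hfe]
  -- expansion of F at an index updated in mode 0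
  have hFA : ∀ (x : Fin (n 0 + 1)) (μ : TIdx m n),
      F (Function.update μ 0 x) = ∑ s, u s 0 x * p s μ := by
    intro x μ
    rw [hF]
    refine Finset.sum_congr rfl fun s _ => ?_
    have h1 : ∀ j ∈ univ.erase (0 : Fin m),
        u s j (Function.update μ 0 x j) = u s j (μ j) := by
      intro j hj
      rw [Function.update_of_ne (Finset.mem_erase.mp hj).1]
    calc ∏ j : Fin m, u s j (Function.update μ 0 x j)
        = u s 0 (Function.update μ 0 x 0) *
            ∏ j ∈ univ.erase 0, u s j (Function.update μ 0 x j) :=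
          (Finset.mul_prod_erase univ _ (Finset.mem_univ 0)).symm
      _ = u s 0 x * p s μ := by
          rw [Function.update_self, hp s μ, Finset.prod_congr rfl h1]
  -- expansion of F at an index updated in modes 0 and j
  have hFB : ∀ (j : Fin m), j ≠ 0 → ∀ (x : Fin (n 0 + 1)) (k : Fin (n j + 1)) (μ : TIdx m n),
      μ j = 0 →
      F (Function.update (Function.update μ 0 x) j k) = ∑ s, u s 0 x * (u s j k * p s μ) := by
    intro j hj x k μ hμj
    rw [hF]
    refine Finset.sum_congr rfl fun s _ => ?_
    set ν := Function.update (Function.update μ 0 x) j k with hν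
    have hν0 : ν 0 = x := by
      rw [hν, Function.update_of_ne (Ne.symm hj), Function.update_self]
    have hνj : ν j = k := by rw [hν, Function.update_self]
    have hνo : ∀ j' : Fin m, j' ≠ 0 → j' ≠ j → ν j' = μ j' := by
      intro j' h0 hjj
      rw [hν, Function.update_of_ne hjj, Function.update_of_ne h0]
    have hjmem : j ∈ univ.erase (0 : Fin m) := Finset.mem_erase.mpr ⟨hj, Finset.mem_univ j⟩
    have hps : p s μ = u s j (μ j) * ∏ j' ∈ (univ.erase 0).erase j, u s j' (μ j') := by
      rw [hp s μ, ← Finset.mul_prod_erase (univ.erase 0) _ hjmem]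
    calc ∏ j' : Fin m, u s j' (ν j')
        = u s 0 (ν 0) * ∏ j' ∈ univ.erase 0, u s j' (ν j') :=
          (Finset.mul_prod_erase univ _ (Finset.mem_univ 0)).symm
      _ = u s 0 x * (u s j (ν j) * ∏ j' ∈ (univ.erase 0).erase j, u s j' (ν j')) := by
          rw [hν0, ← Finset.mul_prod_erase (univ.erase 0) _ hjmem]
      _ = u s 0 x * (u s j k * ∏ j' ∈ (univ.erase 0).erase j, u s j' (μ j')) := by
          rw [hνj]
          congr 2
          refine Finset.prod_congr rfl fun j' hj' => ?_
          have h1 := Finset.mem_erase.mp hj'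
          have h2 := Finset.mem_erase.mp h1.2
          rw [hνo j' h2.1 h1.1]
      _ = u s 0 x * (u s j k * p s μ) := by
          rw [hps, hμj, hnorm s j hj, one_mul]
  -- the residual formula
  have hres : ∀ (Gv : Fin r → ℂ) (j : Fin m), j ≠ 0 → ∀ (i : Fin r) (k : Fin (n j + 1))
      (μ : TIdx m n), μ j = 0 →
      (∑ ℓ : Fin r, Gv ℓ * F (Function.update μ 0 (Fin.castLE hr ℓ))) -
        F (Function.update (Function.update μ 0 (Fin.castLE hr i)) j k)
      = ∑ s, ((∑ ℓ, W s ℓ * Gv ℓ) - u s 0 (Fin.castLE hr i) * u s j k) * p s μ := by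
    intro Gv j hj i k μ hμj
    have h1 : ∀ ℓ ∈ univ, Gv ℓ * F (Function.update μ 0 (Fin.castLE hr ℓ))
        = ∑ s, Gv ℓ * (u s 0 (Fin.castLE hr ℓ) * p s μ) := by
      intro ℓ _ ; rw [hFA, Finset.mul_sum]
    rw [Finset.sum_congr rfl h1, Finset.sum_comm, hFB j hj _ k μ hμj,
      ← Finset.sum_sub_distrib]
    refine Finset.sum_congr rfl fun s _ => ?_
    rw [sub_mul, Finset.sum_mul]
    congr 1
    · refine Finset.sum_congr rfl fun ℓ _ => ?_
      rw [hWdef]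
      simp only [Matrix.of_apply]
      ring
    · ring
  -- the exact generating matrix
  set G₀ : Fin r → Fin r → (j : Fin m) → Fin (n j + 1) → ℂ :=
    fun ℓ i j k => (W⁻¹).mulVec (fun s => u s 0 (Fin.castLE hr i) * u s j k) ℓ with hG₀def
  have hG₀eq : ∀ (i : Fin r) (j : Fin m) (k : Fin (n j + 1)) (s : Fin r),
      ∑ ℓ, W s ℓ * G₀ ℓ i j k = u s 0 (Fin.castLE hr i) * u s j k := by
    intro i j k s
    have h1 : W.mulVec ((W⁻¹).mulVec (fun s => u s 0 (Fin.castLE hr i) * u s j k)) s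
        = u s 0 (Fin.castLE hr i) * u s j k := by
      rw [Matrix.mulVec_mulVec, hWW, Matrix.one_mulVec]
    rw [← h1]
    simp only [Matrix.mulVec, dotProduct, hG₀def]
  have hgobj0 : gobj hr F G₀ = 0 := by
    unfold gobj
    refine Finset.sum_eq_zero fun i _ => Finset.sum_eq_zero fun j hj =>
      Finset.sum_eq_zero fun k _ => Finset.sum_eq_zero fun μ hμ => ?_
    have hj' : j ≠ 0 := (Finset.mem_filter.mp hj).2
    have hμ' := (Finset.mem_filter.mp hμ).2
    have hre := hres (fun ℓ => G₀ ℓ i j k) j hj' i k μ hμ'.2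
    rw [hre, Finset.sum_eq_zero fun s _ => by rw [hG₀eq, sub_self, zero_mul]]
    simp
  have hGnn : (0:ℝ) ≤ gobj hr F G := by
    unfold gobj
    refine Finset.sum_nonneg fun i _ => Finset.sum_nonneg fun j _ =>
      Finset.sum_nonneg fun k _ => Finset.sum_nonneg fun μ _ => sq_nonneg _
  have h0 : gobj hr F G = 0 := le_antisymm (le_of_le_of_eq (hG G₀) hgobj0) hGnn
  -- each residual of the minimizer vanishes
  have hterm : ∀ i : Fin r, ∀ j ∈ univ.filter (fun j : Fin m => j ≠ 0),
      ∀ k ∈ univ.filter (fun k : Fin (n j + 1) => k ≠ 0),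
      ∀ μ ∈ univ.filter (fun μ : TIdx m n => μ 0 = 0 ∧ μ j = 0),
      (∑ ℓ : Fin r, G ℓ i j k * F (Function.update μ 0 (Fin.castLE hr ℓ))) -
        F (Function.update (Function.update μ 0 (Fin.castLE hr i)) j k) = 0 := by
    unfold gobj at h0
    intro i j hj k hk μ hμ
    have h1 := (Finset.sum_eq_zero_iff_of_nonneg (fun i _ =>
      Finset.sum_nonneg fun j _ => Finset.sum_nonneg fun k _ =>
        Finset.sum_nonneg fun μ _ => sq_nonneg _)).mp h0 i (Finset.mem_univ i)
    have h2 := (Finset.sum_eq_zero_iff_of_nonneg (fun j _ =>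
      Finset.sum_nonneg fun k _ => Finset.sum_nonneg fun μ _ => sq_nonneg _)).mp h1 j hj
    have h3 := (Finset.sum_eq_zero_iff_of_nonneg (fun k _ =>
      Finset.sum_nonneg fun μ _ => sq_nonneg _)).mp h2 k hk
    have h4 := (Finset.sum_eq_zero_iff_of_nonneg (fun μ _ => sq_nonneg _)).mp h3 μ hμ
    have h5 := pow_eq_zero_iff (n := 2) (by norm_num) |>.mp h4
    exact norm_eq_zero.mp h5
  -- the eigen equations
  have heig : ∀ (j : Fin m), j ≠ 0 → ∀ (k : Fin (n j + 1)), k ≠ 0 → ∀ (i s : Fin r),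
      ∑ ℓ, W s ℓ * G ℓ i j k = u s 0 (Fin.castLE hr i) * u s j k := by
    intro j hj k hk i
    set E : Fin r → ℂ :=
      fun s => (∑ ℓ, W s ℓ * G ℓ i j k) - u s 0 (Fin.castLE hr i) * u s j k with hEdef
    suffices hE0 : E = 0 by
      intro s
      have h1 : E s = 0 := by rw [hE0]; rfl
      rw [hEdef] at h1
      simp only at h1
      exact sub_eq_zero.mp h1
    set A : Matrix {μ : TIdx m n // μ 0 = 0 ∧ μ j = 0} (Fin r) ℂ :=
      Matrix.of fun (μ : {μ : TIdx m n // μ 0 = 0 ∧ μ j = 0}) (ℓ : Fin r) =>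
        ∑ s : Fin r, ∏ j' : Fin m,
          u s j' (Function.update (μ : TIdx m n) 0 (Fin.castLE hr ℓ) j') with hAdef
    set P : Matrix {μ : TIdx m n // μ 0 = 0 ∧ μ j = 0} (Fin r) ℂ :=
      Matrix.of (fun μ s => p s (μ : TIdx m n)) with hPdef
    have hAPW : A = P * W := by
      ext μ ℓ
      rw [hAdef, Matrix.of_apply, Matrix.mul_apply]
      have h1 : (∑ s, ∏ j' : Fin m,
          u s j' (Function.update (μ : TIdx m n) 0 (Fin.castLE hr ℓ) j'))
          = F (Function.update (μ : TIdx m n) 0 (Fin.castLE hr ℓ)) := (hF _).symm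
      rw [h1, hFA]
      refine Finset.sum_congr rfl fun s _ => ?_
      simp only [hPdef, hWdef, Matrix.of_apply]
      ring
    have hrk := hrank j hj
    rw [← hAdef] at hrk
    have hker : LinearMap.ker A.mulVecLin = ⊥ := by
      have h1 := LinearMap.finrank_range_add_finrank_ker A.mulVecLin
      have h2 : Module.finrank ℂ (Fin r → ℂ) = r := Module.finrank_fin_fun ℂ
      have hrk2 : Module.finrank ℂ (LinearMap.range A.mulVecLin) = r := hrk
      rw [h2, hrk2] at h1
      have h3 : Module.finrank ℂ (LinearMap.ker A.mulVecLin) = 0 := add_eq_left.mp h1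
      exact Submodule.finrank_eq_zero.mp h3
    have hAinj : Function.Injective A.mulVec := by
      rw [← Matrix.coe_mulVecLin]
      exact LinearMap.ker_eq_bot.mp hker
    have hPE : P.mulVec E = 0 := by
      funext μ
      have hμp := μ.2
      have h5 := hterm i j (Finset.mem_filter.mpr ⟨Finset.mem_univ _, hj⟩) k
        (Finset.mem_filter.mpr ⟨Finset.mem_univ _, hk⟩) (μ : TIdx m n)
        (Finset.mem_filter.mpr ⟨Finset.mem_univ _, hμp⟩)
      have hre := hres (fun ℓ => G ℓ i j k) j hj i k (μ : TIdx m n) hμp.2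
      rw [hre] at h5
      simp only [Matrix.mulVec, dotProduct, hPdef, Matrix.of_apply, Pi.zero_apply]
      rw [← h5]
      refine Finset.sum_congr rfl fun s _ => ?_
      rw [hEdef]
      simp only
      ring
    have hx : (W⁻¹).mulVec E = 0 := by
      apply hAinj
      calc A.mulVec ((W⁻¹).mulVec E)
          = P.mulVec (W.mulVec ((W⁻¹).mulVec E)) := by
            rw [hAPW, ← Matrix.mulVec_mulVec]
        _ = 0 := by rw [Matrix.mulVec_mulVec E W W⁻¹, hWW, Matrix.one_mulVec, hPE]
        _ = A.mulVec 0 := (Matrix.mulVec_zero A).symm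
    calc E = W.mulVec ((W⁻¹).mulVec E) := by
          rw [Matrix.mulVec_mulVec E W W⁻¹, hWW, Matrix.one_mulVec]
      _ = 0 := by rw [hx, Matrix.mulVec_zero]
  -- matrix form of the eigen equations
  have hMW : ∀ (j : Fin m), j ≠ 0 → ∀ (k : Fin (n j + 1)), k ≠ 0 →
      Mhat G j k * Wᵀ = Wᵀ * Matrix.diagonal (fun s => u s j k) := by
    intro j hj k hk
    ext i s
    rw [Matrix.mul_apply, Matrix.mul_diagonal]
    calc ∑ ℓ, Mhat G j k i ℓ * Wᵀ ℓ s = ∑ ℓ, W s ℓ * G ℓ i j k := by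
          refine Finset.sum_congr rfl fun ℓ _ => ?_
          rw [Mhat]
          simp only [Matrix.of_apply, Matrix.transpose_apply]
          ring
      _ = u s 0 (Fin.castLE hr i) * u s j k := heig j hj k hk i s
      _ = Wᵀ i s * u s j k := by
          rw [hWdef]
          simp only [Matrix.transpose_apply, Matrix.of_apply]
  set Λ : Fin r → ℂ :=
    fun s => ∑ j : Fin m, ∑ k : Fin (n j + 1), (ξ j k : ℂ) * u s j k with hΛdef
  have hΛinj : Function.Injective Λ := hdist
  have hQQ : Q * Qᴴ = 1 := by
    have h1 := Matrix.mem_unitaryGroup_iff.mp hQ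
    rwa [Matrix.star_eq_conjTranspose] at h1
  have hQHunit : IsUnit Qᴴ := IsUnit.of_mul_eq_one_right Q hQQ
  have hWt : IsUnit Wᵀ := by
    rw [Matrix.isUnit_iff_isUnit_det, Matrix.det_transpose]
    exact (Matrix.isUnit_iff_isUnit_det W).mp hW
  set Sm : Matrix (Fin r) (Fin r) ℂ := Qᴴ * Wᵀ with hSmdef
  have hSunit : IsUnit Sm := hQHunit.mul hWt
  set Mtot : Matrix (Fin r) (Fin r) ℂ :=
    ∑ j : Fin m, ∑ k : Fin (n j + 1), (ξ j k : ℂ) • Mhat G j k with hMtotdef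
  have hMWtot : Mtot * Wᵀ = Wᵀ * Matrix.diagonal Λ := by
    ext i s
    rw [hMtotdef, Matrix.mul_diagonal, hΛdef]
    simp only [Finset.sum_mul, Matrix.smul_mul, Matrix.sum_apply, Matrix.smul_apply,
      smul_eq_mul]
    rw [Finset.mul_sum]
    refine Finset.sum_congr rfl fun j _ => ?_
    rw [Finset.mul_sum]
    refine Finset.sum_congr rfl fun k _ => ?_
    by_cases hj : j = 0
    · subst hj; rw [hξ1]; simp
    · by_cases hk : k = 0
      · subst hk; rw [hξ2]; simp
      · have h1 := congrFun (congrFun (hMW j hj k hk) i) s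
        rw [Matrix.mul_diagonal] at h1
        rw [h1]
        ring
  have hTS : T * Sm = Sm * Matrix.diagonal Λ := by
    rw [← hQT, hSmdef]
    have h1 : Qᴴ * Mtot * Q * (Qᴴ * Wᵀ) = Qᴴ * Mtot * (Q * Qᴴ) * Wᵀ := by
      noncomm_ring
    rw [h1, hQQ, Matrix.mul_one, Matrix.mul_assoc, hMWtot, ← Matrix.mul_assoc]
  obtain ⟨σ, hσ⟩ := schur_diag Sm T hSunit hTtri Λ hΛinj hTS
  have hvh : ∀ (t : Fin r) (j : Fin m), j ≠ 0 → ∀ k, vhat G Q t j k = u (σ t) j k := by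
    intro t j hj k
    by_cases hk : k = 0
    · subst hk
      rw [vhat, if_pos rfl, hnorm (σ t) j hj]
    · rw [vhat, if_neg hk]
      have hB : (Qᴴ * Mhat G j k * Q) * Sm = Sm * Matrix.diagonal (fun s => u s j k) := by
        have h1 : Qᴴ * Mhat G j k * Q * (Qᴴ * Wᵀ) = Qᴴ * Mhat G j k * (Q * Qᴴ) * Wᵀ := by
          noncomm_ring
        rw [hSmdef, h1, hQQ, Matrix.mul_one, Matrix.mul_assoc, hMW j hj k hk,
          ← Matrix.mul_assoc]
      exact hσ (fun s => u s j k) _ hB t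
  -- the exact first-mode choice
  have hz : ∀ idx : TIdx m n, (∑ s, u (σ s) 0 (idx 0) *
      ∏ j ∈ univ.filter (fun j : Fin m => j ≠ 0), vhat G Q s j (idx j)) = F idx := by
    intro idx
    rw [hF]
    have h2 : ∀ s ∈ univ, u (σ s) 0 (idx 0) *
        ∏ j ∈ univ.filter (fun j : Fin m => j ≠ 0), vhat G Q s j (idx j)
        = ∏ j : Fin m, u (σ s) j (idx j) := by
      intro s _
      have h1 : ∏ j ∈ univ.filter (fun j : Fin m => j ≠ 0), vhat G Q s j (idx j)
          = ∏ j ∈ univ.filter (fun j : Fin m => j ≠ 0), u (σ s) j (idx j) :=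
        Finset.prod_congr rfl fun j hj => hvh s j (Finset.mem_filter.mp hj).2 (idx j)
      rw [h1, hfe]
      exact Finset.mul_prod_erase (univ : Finset (Fin m)) (fun j => u (σ s) j (idx j)) (Finset.mem_univ 0)
    rw [Finset.sum_congr rfl h2]
    exact Equiv.sum_comp σ (fun s => ∏ j : Fin m, u s j (idx j))
  have hzt : tnorm (fun idx : TIdx m n => (∑ s, (fun s => u (σ s) 0) s (idx 0) *
      ∏ j ∈ univ.filter (fun j : Fin m => j ≠ 0), vhat G Q s j (idx j)) - F idx) = 0 := by
    refine tnorm_of_zero fun idx => ?_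
    simp only
    rw [sub_eq_zero]
    exact hz idx
  have hv1z := hv1 (fun s => u (σ s) 0)
  rw [hzt] at hv1z
  funext idx
  have h6 := tnorm_le_zero hv1z idx
  exact sub_eq_zero.mp h6


end
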